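/- In the setting of the censored GPD Tobit model with z = 1 + ξT_u/σ, the Fisher information entry E[-∂²l(ξ,σ)/∂ξ²] equals 2/((1+ξ)(1+2ξ)) + z^{-2-1/ξ}/((1+ξ)(1+2ξ)ξ²) · { -1 - ξ + z(2 + 4ξ) - z²(1+ξ)(1+2ξ) }. -/

import Mathlib

open MeasureTheory Set Filter

/-- GPD CDF. -/
noncomputable def gpdCDF (ξ σ y : ℝ) : ℝ := 1 - (1 + ξ * y / σ) ^ (-1/ξ)

/-- GPD density. -/
noncomputable def gpdPDF (ξ σ y : ℝ) : ℝ := σ⁻¹ * (1 + ξ * y / σ) ^ (-1 - 1/ξ)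

/-- Censored (Tobit) GPD log-likelihood. -/
noncomputable def cll (Tu ξ σ y : ℝ) : ℝ :=
  if Tu < y then Real.log (1 - gpdCDF ξ σ Tu) else Real.log (gpdPDF ξ σ y)

lemma upos' {t k : ℝ} (ht : 0 ≤ t) (hk : 0 ≤ k) : 0 < 1 + t * k := by nlinarith

/-- derivative of censored branch -/
lemma hd_c1 (k : ℝ) (hk : 0 ≤ k) {t : ℝ} (ht : 0 < t) :
    HasDerivAt (fun t : ℝ => -t⁻¹ * Real.log (1 + t * k))
      (t⁻¹ * t⁻¹ * Real.log (1 + t * k) + -t⁻¹ * (k * (1 + t * k)⁻¹)) t := by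
  have hu : 0 < 1 + t * k := upos' ht.le hk
  have h1 : HasDerivAt (fun t : ℝ => 1 + t * k) k t := by
    simpa using ((hasDerivAt_id t).mul_const k).const_add 1
  have hlog : HasDerivAt (fun t : ℝ => Real.log (1 + t * k)) (k * (1 + t * k)⁻¹) t := by
    simpa [div_eq_mul_inv] using h1.log hu.ne'
  have hinv : HasDerivAt (fun t : ℝ => -t⁻¹) (t⁻¹ * t⁻¹) t := by
    have := (hasDerivAt_inv ht.ne').fun_neg
    convert! this using 1
    rw [neg_neg, pow_two, mul_inv]
  simpa using hinv.fun_mul hlog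

lemma hd_c2 (k : ℝ) (hk : 0 ≤ k) {t : ℝ} (ht : 0 < t) :
    HasDerivAt (fun t : ℝ => t⁻¹ * t⁻¹ * Real.log (1 + t * k) + -t⁻¹ * (k * (1 + t * k)⁻¹))
      (-(2 * (t⁻¹ * t⁻¹ * t⁻¹)) * Real.log (1 + t * k) + 2 * (t⁻¹ * t⁻¹) * (k * (1 + t * k)⁻¹)
        + t⁻¹ * ((k * (1 + t * k)⁻¹) * (k * (1 + t * k)⁻¹))) t := by
  have hu : 0 < 1 + t * k := upos' ht.le hk
  have h1 : HasDerivAt (fun t : ℝ => 1 + t * k) k t := by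
    simpa using ((hasDerivAt_id t).mul_const k).const_add 1
  have hlog : HasDerivAt (fun t : ℝ => Real.log (1 + t * k)) (k * (1 + t * k)⁻¹) t := by
    simpa [div_eq_mul_inv] using h1.log hu.ne'
  have hi : HasDerivAt (fun t : ℝ => t⁻¹) (-(t ^ 2)⁻¹) t := hasDerivAt_inv ht.ne'
  have hII : HasDerivAt (fun t : ℝ => t⁻¹ * t⁻¹) (-(t ^ 2)⁻¹ * t⁻¹ + t⁻¹ * -(t ^ 2)⁻¹) t :=
    hi.mul hi
  have hui : HasDerivAt (fun t : ℝ => (1 + t * k)⁻¹) (-k / (1 + t * k) ^ 2) t := by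
    simpa using h1.fun_inv hu.ne'
  have hB : HasDerivAt (fun t : ℝ => -t⁻¹ * (k * (1 + t * k)⁻¹))
      ((t ^ 2)⁻¹ * (k * (1 + t * k)⁻¹) + -t⁻¹ * (k * (-k / (1 + t * k) ^ 2))) t := by
    have := (hi.fun_neg.fun_mul (hui.const_mul k))
    simpa using this
  have H := (hII.mul hlog).add hB
  convert! H using 1
  have h2 : (t:ℝ) ^ 2 ≠ 0 := pow_ne_zero 2 ht.ne'
  field_simp
  ring

/-- derivative of uncensored branch -/
lemma hd_u1 (c k : ℝ) (hk : 0 ≤ k) {t : ℝ} (ht : 0 < t) :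
    HasDerivAt (fun t : ℝ => c + (-1 - t⁻¹) * Real.log (1 + t * k))
      (t⁻¹ * t⁻¹ * Real.log (1 + t * k) + (-1 - t⁻¹) * (k * (1 + t * k)⁻¹)) t := by
  have hu : 0 < 1 + t * k := upos' ht.le hk
  have h1 : HasDerivAt (fun t : ℝ => 1 + t * k) k t := by
    simpa using ((hasDerivAt_id t).mul_const k).const_add 1
  have hlog : HasDerivAt (fun t : ℝ => Real.log (1 + t * k)) (k * (1 + t * k)⁻¹) t := by
    simpa [div_eq_mul_inv] using h1.log hu.ne'
  have hinv : HasDerivAt (fun t : ℝ => -1 - t⁻¹) (t⁻¹ * t⁻¹) t := by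
    have h := (hasDerivAt_inv ht.ne').const_sub (-1 : ℝ)
    convert! h using 1
    rw [neg_neg, pow_two, mul_inv]
  simpa using (hinv.mul hlog).const_add c

lemma hd_u2 (k : ℝ) (hk : 0 ≤ k) {t : ℝ} (ht : 0 < t) :
    HasDerivAt (fun t : ℝ => t⁻¹ * t⁻¹ * Real.log (1 + t * k) + (-1 - t⁻¹) * (k * (1 + t * k)⁻¹))
      (-(2 * (t⁻¹ * t⁻¹ * t⁻¹)) * Real.log (1 + t * k) + 2 * (t⁻¹ * t⁻¹) * (k * (1 + t * k)⁻¹)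
        + (1 + t⁻¹) * ((k * (1 + t * k)⁻¹) * (k * (1 + t * k)⁻¹))) t := by
  have hu : 0 < 1 + t * k := upos' ht.le hk
  have h1 : HasDerivAt (fun t : ℝ => 1 + t * k) k t := by
    simpa using ((hasDerivAt_id t).mul_const k).const_add 1
  have hlog : HasDerivAt (fun t : ℝ => Real.log (1 + t * k)) (k * (1 + t * k)⁻¹) t := by
    simpa [div_eq_mul_inv] using h1.log hu.ne'
  have hi : HasDerivAt (fun t : ℝ => t⁻¹) (-(t ^ 2)⁻¹) t := hasDerivAt_inv ht.ne'
  have hII : HasDerivAt (fun t : ℝ => t⁻¹ * t⁻¹) (-(t ^ 2)⁻¹ * t⁻¹ + t⁻¹ * -(t ^ 2)⁻¹) t :=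
    hi.mul hi
  have hui : HasDerivAt (fun t : ℝ => (1 + t * k)⁻¹) (-k / (1 + t * k) ^ 2) t := by
    simpa using h1.fun_inv hu.ne'
  have hinv : HasDerivAt (fun t : ℝ => -1 - t⁻¹) ((t ^ 2)⁻¹) t := by
    have h := (hasDerivAt_inv ht.ne').const_sub (-1 : ℝ)
    convert! h using 1
    rw [neg_neg]
  have hB : HasDerivAt (fun t : ℝ => (-1 - t⁻¹) * (k * (1 + t * k)⁻¹))
      ((t ^ 2)⁻¹ * (k * (1 + t * k)⁻¹) + (-1 - t⁻¹) * (k * (-k / (1 + t * k) ^ 2))) t :=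
    hinv.mul (hui.const_mul k)
  have H := (hII.mul hlog).add hB
  convert! H using 1
  have h2 : (t : ℝ) ^ 2 ≠ 0 := pow_ne_zero 2 ht.ne'
  have hun : (1 + t * k) ≠ 0 := hu.ne'
  field_simp
  ring

/-- explicit negative second log-derivative, uncensored branch -/
noncomputable def D2U (ξ σ y : ℝ) : ℝ :=
  -(2 * (ξ⁻¹ * ξ⁻¹ * ξ⁻¹)) * Real.log (1 + ξ * (y/σ))
    + 2 * (ξ⁻¹ * ξ⁻¹) * ((y/σ) * (1 + ξ * (y/σ))⁻¹)
    + (1 + ξ⁻¹) * (((y/σ) * (1 + ξ * (y/σ))⁻¹) * ((y/σ) * (1 + ξ * (y/σ))⁻¹))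

/-- explicit negative second log-derivative, censored branch -/
noncomputable def D2C (ξ σ Tu : ℝ) : ℝ :=
  -(2 * (ξ⁻¹ * ξ⁻¹ * ξ⁻¹)) * Real.log (1 + ξ * (Tu/σ))
    + 2 * (ξ⁻¹ * ξ⁻¹) * ((Tu/σ) * (1 + ξ * (Tu/σ))⁻¹)
    + ξ⁻¹ * (((Tu/σ) * (1 + ξ * (Tu/σ))⁻¹) * ((Tu/σ) * (1 + ξ * (Tu/σ))⁻¹))

lemma deriv2_unc (ξ σ Tu y : ℝ) (hξ : 0 < ξ) (hσ : 0 < σ) (hy : 0 ≤ y) (hyT : ¬ Tu < y) :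
    deriv (deriv (fun t => cll Tu t σ y)) ξ = D2U ξ σ y := by
  have hk : 0 ≤ y/σ := div_nonneg hy hσ.le
  have hfg : (fun t => cll Tu t σ y) =ᶠ[nhds ξ]
      (fun t => Real.log σ⁻¹ + (-1 - t⁻¹) * Real.log (1 + t * (y/σ))) := by
    filter_upwards [Ioi_mem_nhds hξ] with t ht
    have hu : 0 < 1 + t * (y/σ) := upos' (le_of_lt ht) hk
    have hd : t * y / σ = t * (y/σ) := mul_div_assoc t y σ
    simp only [cll, if_neg hyT, gpdPDF, hd]
    rw [Real.log_mul (inv_ne_zero hσ.ne') (Real.rpow_pos_of_pos hu _).ne', Real.log_rpow hu,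
      one_div]
  have hstep1 : deriv (deriv (fun t => cll Tu t σ y)) ξ =
      deriv (deriv (fun t => Real.log σ⁻¹ + (-1 - t⁻¹) * Real.log (1 + t * (y/σ)))) ξ :=
    (hfg.deriv).deriv_eq
  have hstep2 : deriv (fun t => Real.log σ⁻¹ + (-1 - t⁻¹) * Real.log (1 + t * (y/σ)))
      =ᶠ[nhds ξ] (fun t => t⁻¹ * t⁻¹ * Real.log (1 + t * (y/σ))
        + (-1 - t⁻¹) * ((y/σ) * (1 + t * (y/σ))⁻¹)) := by
    filter_upwards [Ioi_mem_nhds hξ] with t ht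
    exact (hd_u1 (Real.log σ⁻¹) (y/σ) hk ht).deriv
  rw [hstep1, hstep2.deriv_eq, (hd_u2 (y/σ) hk hξ).deriv, D2U]

lemma deriv2_cen (ξ σ Tu y : ℝ) (hξ : 0 < ξ) (hσ : 0 < σ) (hT : 0 ≤ Tu) (hyT : Tu < y) :
    deriv (deriv (fun t => cll Tu t σ y)) ξ = D2C ξ σ Tu := by
  have hk : 0 ≤ Tu/σ := div_nonneg hT hσ.le
  have hfg : (fun t => cll Tu t σ y) =ᶠ[nhds ξ]
      (fun t => -t⁻¹ * Real.log (1 + t * (Tu/σ))) := by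
    filter_upwards [Ioi_mem_nhds hξ] with t ht
    have hu : 0 < 1 + t * (Tu/σ) := upos' (le_of_lt ht) hk
    have hd : t * Tu / σ = t * (Tu/σ) := mul_div_assoc t Tu σ
    simp only [cll, if_pos hyT, gpdCDF, hd, sub_sub_cancel]
    rw [Real.log_rpow hu]
    ring
  have hstep1 : deriv (deriv (fun t => cll Tu t σ y)) ξ =
      deriv (deriv (fun t => -t⁻¹ * Real.log (1 + t * (Tu/σ)))) ξ := (hfg.deriv).deriv_eq
  have hstep2 : deriv (fun t => -t⁻¹ * Real.log (1 + t * (Tu/σ)))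
      =ᶠ[nhds ξ] (fun t => t⁻¹ * t⁻¹ * Real.log (1 + t * (Tu/σ))
        + -t⁻¹ * ((Tu/σ) * (1 + t * (Tu/σ))⁻¹)) := by
    filter_upwards [Ioi_mem_nhds hξ] with t ht
    exact (hd_c1 (Tu/σ) hk ht).deriv
  rw [hstep1, hstep2.deriv_eq, (hd_c2 (Tu/σ) hk hξ).deriv, D2C]

/-- antiderivative of the uncensored-part integrand -/
noncomputable def Phi (ξ σ y : ℝ) : ℝ :=
  ξ⁻¹ * ξ⁻¹ * ξ⁻¹ *
    ((-2) * (Real.log (1 + ξ * y / σ) * (1 + ξ * y / σ) ^ (-1/ξ))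
      + (3 - ξ) * (1 + ξ * y / σ) ^ (-1/ξ)
      + (-(2 * (ξ + 2) / (ξ + 1))) * (1 + ξ * y / σ) ^ (-1 - 1/ξ)
      + ((ξ + 1) / (2 * ξ + 1)) * (1 + ξ * y / σ) ^ (-2 - 1/ξ))

lemma hasDeriv_Phi (ξ σ : ℝ) (hξ : 0 < ξ) (hσ : 0 < σ) {y : ℝ} (hy : 0 ≤ y) :
    HasDerivAt (Phi ξ σ) ((-(D2U ξ σ y)) * gpdPDF ξ σ y) y := by
  have hq : 0 ≤ ξ * y / σ := by positivity
  have hu : 0 < 1 + ξ * y / σ := by linarith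
  have b : HasDerivAt (fun y : ℝ => 1 + ξ * y / σ) (ξ / σ) y := by
    simpa using (((hasDerivAt_id y).const_mul ξ).div_const σ).const_add 1
  have hL : HasDerivAt (fun y : ℝ => Real.log (1 + ξ * y / σ)) (ξ / σ / (1 + ξ * y / σ)) y :=
    b.log hu.ne'
  have hW : HasDerivAt (fun y : ℝ => (1 + ξ * y / σ) ^ (-1/ξ))
      (ξ / σ * (-1/ξ) * (1 + ξ * y / σ) ^ (-1/ξ - 1)) y := b.rpow_const (Or.inl hu.ne')
  have hV : HasDerivAt (fun y : ℝ => (1 + ξ * y / σ) ^ (-1 - 1/ξ))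
      (ξ / σ * (-1 - 1/ξ) * (1 + ξ * y / σ) ^ (-1 - 1/ξ - 1)) y := b.rpow_const (Or.inl hu.ne')
  have hX : HasDerivAt (fun y : ℝ => (1 + ξ * y / σ) ^ (-2 - 1/ξ))
      (ξ / σ * (-2 - 1/ξ) * (1 + ξ * y / σ) ^ (-2 - 1/ξ - 1)) y := b.rpow_const (Or.inl hu.ne')
  have H := (((((hL.mul hW).const_mul (-2 : ℝ)).add (hW.const_mul (3 - ξ))).add
      (hV.const_mul (-(2 * (ξ + 2) / (ξ + 1))))).add
      (hX.const_mul ((ξ + 1) / (2 * ξ + 1)))).const_mul (ξ⁻¹ * ξ⁻¹ * ξ⁻¹)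
  have e0 : (1 + ξ * y / σ) ^ (-1/ξ - 1) = (1 + ξ * y / σ) ^ (-1/ξ) * (1 + ξ * y / σ)⁻¹ := by
    rw [show (-1/ξ - 1 : ℝ) = -1/ξ + (-1) by ring, Real.rpow_add hu, Real.rpow_neg_one]
  have e1 : (1 + ξ * y / σ) ^ (-1 - 1/ξ) = (1 + ξ * y / σ) ^ (-1/ξ) * (1 + ξ * y / σ)⁻¹ := by
    rw [show (-1 - 1/ξ : ℝ) = -1/ξ + (-1) by ring, Real.rpow_add hu, Real.rpow_neg_one]
  have e2 : (1 + ξ * y / σ) ^ (-1 - 1/ξ - 1)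
      = (1 + ξ * y / σ) ^ (-1/ξ) * (1 + ξ * y / σ)⁻¹ * (1 + ξ * y / σ)⁻¹ := by
    rw [show (-1 - 1/ξ - 1 : ℝ) = -1/ξ + (-1) + (-1) by ring, Real.rpow_add hu,
      Real.rpow_add hu, Real.rpow_neg_one]
  have e4 : (1 + ξ * y / σ) ^ (-2 - 1/ξ - 1)
      = (1 + ξ * y / σ) ^ (-1/ξ) * (1 + ξ * y / σ)⁻¹ * (1 + ξ * y / σ)⁻¹
        * (1 + ξ * y / σ)⁻¹ := by
    rw [show (-2 - 1/ξ - 1 : ℝ) = -1/ξ + (-1) + (-1) + (-1) by ring, Real.rpow_add hu,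
      Real.rpow_add hu, Real.rpow_add hu, Real.rpow_neg_one]
  unfold Phi
  convert! H using 1
  rw [D2U, gpdPDF, e0, e1, e2, e4]
  simp only [← mul_div_assoc]
  have h1 : (ξ : ℝ) + 1 ≠ 0 := by positivity
  have h2 : (2 : ℝ) * ξ + 1 ≠ 0 := by positivity
  field_simp
  ring

lemma hasDeriv_Psi (ξ σ : ℝ) (hξ : 0 < ξ) (hσ : 0 < σ) {y : ℝ} (hy : 0 ≤ y) :
    HasDerivAt (fun y : ℝ => -(1 + ξ * y / σ) ^ (-1/ξ)) (gpdPDF ξ σ y) y := by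
  have hq : 0 ≤ ξ * y / σ := by positivity
  have hu : 0 < 1 + ξ * y / σ := by linarith
  have b : HasDerivAt (fun y : ℝ => 1 + ξ * y / σ) (ξ / σ) y := by
    simpa using (((hasDerivAt_id y).const_mul ξ).div_const σ).const_add 1
  have h := (b.rpow_const (p := -1/ξ) (Or.inl hu.ne')).neg
  convert! h using 1
  rw [gpdPDF, show (-1 - 1/ξ : ℝ) = -1/ξ - 1 by ring]
  field_simp

lemma tendsto_Psi (ξ σ : ℝ) (hξ : 0 < ξ) (hσ : 0 < σ) :
    Tendsto (fun y : ℝ => -(1 + ξ * y / σ) ^ (-1/ξ)) atTop (nhds 0) := by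
  have h1 : Tendsto (fun y : ℝ => 1 + ξ * y / σ) atTop atTop := by
    apply tendsto_atTop_add_const_left
    exact (Tendsto.const_mul_atTop hξ tendsto_id).atTop_div_const hσ
  have h2 : Tendsto (fun x : ℝ => x ^ (-(1/ξ))) atTop (nhds 0) :=
    tendsto_rpow_neg_atTop (by positivity)
  have := (h2.comp h1).neg
  simpa [neg_div, Function.comp] using this

lemma pdf_nonneg (ξ σ : ℝ) (hξ : 0 < ξ) (hσ : 0 < σ) {y : ℝ} (hy : 0 ≤ y) :
    0 ≤ gpdPDF ξ σ y := by
  have hq : 0 ≤ ξ * y / σ := by positivity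
  have hu : (0:ℝ) ≤ 1 + ξ * y / σ := by linarith
  exact mul_nonneg (inv_nonneg.2 hσ.le) (Real.rpow_nonneg hu _)

lemma tail_pdf_integral (ξ σ Tu : ℝ) (hξ : 0 < ξ) (hσ : 0 < σ) (hTu : 0 < Tu) :
    ∫ y in Ioi Tu, gpdPDF ξ σ y = (1 + ξ * Tu / σ) ^ (-1/ξ) := by
  have h := integral_Ioi_of_hasDerivAt_of_nonneg'
    (g := fun y : ℝ => -(1 + ξ * y / σ) ^ (-1/ξ)) (g' := gpdPDF ξ σ) (a := Tu) (l := 0)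
    (fun x hx => hasDeriv_Psi ξ σ hξ hσ (le_trans hTu.le hx))
    (fun x hx => pdf_nonneg ξ σ hξ hσ (le_trans hTu.le hx.le))
    (tendsto_Psi ξ σ hξ hσ)
  simpa using h

lemma tail_pdf_integrable (ξ σ Tu : ℝ) (hξ : 0 < ξ) (hσ : 0 < σ) (hTu : 0 < Tu) :
    IntegrableOn (gpdPDF ξ σ) (Ioi Tu) := by
  exact integrableOn_Ioi_deriv_of_nonneg'
    (g := fun y : ℝ => -(1 + ξ * y / σ) ^ (-1/ξ)) (l := 0)
    (fun x hx => hasDeriv_Psi ξ σ hξ hσ (le_trans hTu.le hx))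
    (fun x hx => pdf_nonneg ξ σ hξ hσ (le_trans hTu.le hx.le))
    (tendsto_Psi ξ σ hξ hσ)

lemma contA (ξ σ Tu : ℝ) (hξ : 0 < ξ) (hσ : 0 < σ) :
    ContinuousOn (fun y => (-(D2U ξ σ y)) * gpdPDF ξ σ y) (Icc 0 Tu) := by
  have hne : ∀ y ∈ Icc (0:ℝ) Tu, (1 + ξ * (y/σ)) ≠ 0 := by
    intro y hy
    have : 0 ≤ ξ * (y/σ) := by
      have := hy.1; positivity
    linarith
  have hne2 : ∀ y ∈ Icc (0:ℝ) Tu, (1 + ξ * y / σ) ≠ 0 ∨ (0:ℝ) ≤ -1 - 1/ξ := by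
    intro y hy
    left
    have : 0 ≤ ξ * y / σ := by
      have := hy.1; positivity
    linarith
  have cb : Continuous (fun y : ℝ => 1 + ξ * (y/σ)) := by continuity
  have cb2 : Continuous (fun y : ℝ => 1 + ξ * y / σ) := by continuity
  have cyd : Continuous (fun y : ℝ => y/σ) := by continuity
  have clog : ContinuousOn (fun y => Real.log (1 + ξ * (y/σ))) (Icc 0 Tu) :=
    ContinuousOn.log cb.continuousOn hne
  have cinv : ContinuousOn (fun y => (1 + ξ * (y/σ))⁻¹) (Icc 0 Tu) :=
    ContinuousOn.inv₀ cb.continuousOn hne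
  have crpow : ContinuousOn (fun y => (1 + ξ * y / σ) ^ (-1 - 1/ξ)) (Icc 0 Tu) :=
    ContinuousOn.rpow_const cb2.continuousOn hne2
  have cA : ContinuousOn (fun y => D2U ξ σ y) (Icc 0 Tu) := by
    unfold D2U
    exact ((continuousOn_const.mul clog).add
      (continuousOn_const.mul (cyd.continuousOn.mul cinv))).add
      (continuousOn_const.mul ((cyd.continuousOn.mul cinv).mul (cyd.continuousOn.mul cinv)))
  exact (cA.neg).mul (continuousOn_const.mul crpow)

/-- With z = 1 + ξT_u/σ, the Fisher information entry E[-∂²l/∂ξ²] equals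
2/((1+ξ)(1+2ξ)) + z^{-2-1/ξ}/((1+ξ)(1+2ξ)ξ²)·{-1-ξ+z(2+4ξ)-z²(1+ξ)(1+2ξ)}. -/
theorem censored_gpd_fisher_xi (ξ σ Tu : ℝ) (hξ : 0 < ξ) (hσ : 0 < σ) (hTu : 0 < Tu) :
    ∫ y in Set.Ioi (0:ℝ),
        (-(deriv (deriv (fun t => cll Tu t σ y)) ξ)) * gpdPDF ξ σ y
      = 2 / ((1 + ξ) * (1 + 2*ξ)) +
        (1 + ξ * Tu / σ) ^ (-2 - 1/ξ) / ((1 + ξ) * (1 + 2*ξ) * ξ^2) *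
          (-1 - ξ + (1 + ξ * Tu / σ) * (2 + 4*ξ)
            - (1 + ξ * Tu / σ)^2 * (1 + ξ) * (1 + 2*ξ)) := by
  have hq : 0 ≤ ξ * Tu / σ := by positivity
  have hz : 0 < 1 + ξ * Tu / σ := by linarith
  -- pointwise identification of the integrand
  have heq1 : EqOn (fun y => (-(deriv (deriv (fun t => cll Tu t σ y)) ξ)) * gpdPDF ξ σ y)
      (fun y => (-(D2U ξ σ y)) * gpdPDF ξ σ y) (Ioc 0 Tu) := by
    intro y hy
    simp only
    rw [deriv2_unc ξ σ Tu y hξ hσ hy.1.le (not_lt.2 hy.2)]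
  have heq2 : EqOn (fun y => (-(deriv (deriv (fun t => cll Tu t σ y)) ξ)) * gpdPDF ξ σ y)
      (fun y => (-(D2C ξ σ Tu)) * gpdPDF ξ σ y) (Ioi Tu) := by
    intro y hy
    simp only
    rw [deriv2_cen ξ σ Tu y hξ hσ hTu.le hy]
  -- integrability on the two pieces
  have hcont := contA ξ σ Tu hξ hσ
  have hint1 : IntegrableOn
      (fun y => (-(deriv (deriv (fun t => cll Tu t σ y)) ξ)) * gpdPDF ξ σ y) (Ioc 0 Tu) :=
    ((hcont.integrableOn_Icc).mono_set Ioc_subset_Icc_self).congr_fun heq1.symm measurableSet_Ioc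
  have hint2 : IntegrableOn
      (fun y => (-(deriv (deriv (fun t => cll Tu t σ y)) ξ)) * gpdPDF ξ σ y) (Ioi Tu) := by
    have hi : IntegrableOn (fun y => (-(D2C ξ σ Tu)) * gpdPDF ξ σ y) (Ioi Tu) :=
      (tail_pdf_integrable ξ σ Tu hξ hσ hTu).const_mul (-(D2C ξ σ Tu))
    exact hi.congr_fun heq2.symm measurableSet_Ioi
  -- split the integral
  rw [← Ioc_union_Ioi_eq_Ioi hTu.le,
    setIntegral_union (Ioc_disjoint_Ioi le_rfl) measurableSet_Ioi hint1 hint2,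
    setIntegral_congr_fun measurableSet_Ioc heq1, setIntegral_congr_fun measurableSet_Ioi heq2]
  -- value of the bounded piece
  have hI1 : ∫ y in Ioc (0:ℝ) Tu, (-(D2U ξ σ y)) * gpdPDF ξ σ y
      = Phi ξ σ Tu - Phi ξ σ 0 := by
    rw [← intervalIntegral.integral_of_le hTu.le]
    apply intervalIntegral.integral_eq_sub_of_hasDerivAt
    · intro x hx
      rw [uIcc_of_le hTu.le] at hx
      exact hasDeriv_Phi ξ σ hξ hσ hx.1
    · apply ContinuousOn.intervalIntegrable
      rw [uIcc_of_le hTu.le]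
      exact hcont
  -- value of the tail piece
  have hI2 : ∫ y in Ioi Tu, (-(D2C ξ σ Tu)) * gpdPDF ξ σ y
      = (-(D2C ξ σ Tu)) * (1 + ξ * Tu / σ) ^ (-1/ξ) := by
    rw [integral_const_mul, tail_pdf_integral ξ σ Tu hξ hσ hTu]
  rw [hI1, hI2]
  -- final algebraic identity
  have f1 : (1 + ξ * Tu / σ) ^ (-1/ξ)
      = (1 + ξ * Tu / σ) ^ (-2 - 1/ξ) * ((1 + ξ * Tu / σ) * (1 + ξ * Tu / σ)) := by
    rw [show (-1/ξ : ℝ) = (-2 - 1/ξ) + 1 + 1 by ring, Real.rpow_add hz, Real.rpow_add hz,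
      Real.rpow_one]
    ring
  have f2 : (1 + ξ * Tu / σ) ^ (-1 - 1/ξ)
      = (1 + ξ * Tu / σ) ^ (-2 - 1/ξ) * (1 + ξ * Tu / σ) := by
    rw [show (-1 - 1/ξ : ℝ) = (-2 - 1/ξ) + 1 by ring, Real.rpow_add hz, Real.rpow_one]
  rw [Phi, Phi, D2C]
  simp only [mul_zero, zero_div, add_zero, Real.one_rpow, Real.log_one, ← mul_div_assoc]
  rw [f1, f2]
  have h1 : (ξ : ℝ) + 1 ≠ 0 := by positivity
  have h2 : (2 : ℝ) * ξ + 1 ≠ 0 := by positivity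
  have h3 : (1 : ℝ) + ξ ≠ 0 := by positivity
  have h4 : (1 : ℝ) + 2 * ξ ≠ 0 := by positivity
  field_simp
  ring
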